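/- Let ℓ, v₀, v_r, δ, Ω > 0, let 0 ≤ ε < 1, set T := 2π/Ω, κ(t) := 1/(1 + ε·cos(Ωt)), and 𝒦 := −2i·v_r²·δ/(ℓ·v₀). If c : ℝ → ℂ is twice differentiable and satisfies the capacitance ODE (2/v₀)·c'(t) + (ℓ/(δ·v_r²))·(d/dt)(c'(t)/κ(t)) = 0 for all t ∈ ℝ, then c'(T) = exp(−i·T·𝒦/√(1 − ε²))·c'(0); that is, the Floquet quasifrequency of the non-constant solutions equals 𝒦/√(1 − ε²). -/

import Mathlib

open Real

private lemma floquet_antideriv (Ω ε : ℝ) (hΩ : 0 < Ω) (hε0 : 0 ≤ ε) (hε1 : ε < 1) (t : ℝ) :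
    HasDerivAt (fun t => (Ω*t - 2*Real.arctan (ε * Real.sin (Ω*t) /
        (1 + Real.sqrt (1-ε^2) + ε * Real.cos (Ω*t)))) / (Ω * Real.sqrt (1-ε^2)))
      (1/(1 + ε * Real.cos (Ω*t))) t := by
  set s := Real.sqrt (1-ε^2) with hsdef
  have hs2 : s^2 = 1 - ε^2 := Real.sq_sqrt (by nlinarith)
  have hspos : 0 < s := Real.sqrt_pos.2 (by nlinarith)
  have hfpos : ∀ u : ℝ, 0 < 1 + ε * Real.cos (Ω*u) := fun u => by
    nlinarith [Real.neg_one_le_cos (Ω*u)]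
  have hDpos : 0 < 1 + s + ε * Real.cos (Ω*t) := by nlinarith [hfpos t]
  have hΩt : HasDerivAt (fun u : ℝ => Ω*u) Ω t := by
    simpa using (hasDerivAt_id t).const_mul Ω
  have hsin : HasDerivAt (fun u : ℝ => Real.sin (Ω*u)) (Real.cos (Ω*t) * Ω) t :=
    (Real.hasDerivAt_sin (Ω*t)).comp t hΩt
  have hcos : HasDerivAt (fun u : ℝ => Real.cos (Ω*u)) (-Real.sin (Ω*t) * Ω) t :=
    (Real.hasDerivAt_cos (Ω*t)).comp t hΩt
  have hN : HasDerivAt (fun u : ℝ => ε * Real.sin (Ω*u)) (ε * (Real.cos (Ω*t) * Ω)) t :=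
    hsin.const_mul ε
  have hD : HasDerivAt (fun u : ℝ => 1 + s + ε * Real.cos (Ω*u)) (ε * (-Real.sin (Ω*t) * Ω)) t := by
    simpa using ((hcos.const_mul ε).const_add (1 + s))
  have hq := hN.div hD hDpos.ne'
  have harc := (Real.hasDerivAt_arctan _).comp t hq
  have hG := ((hΩt.sub ((harc.const_mul 2))).div_const (Ω * s))
  refine HasDerivAt.congr_deriv hG ?_; symm
  simp only [Pi.div_apply]
  have hsc : Real.sin (Ω*t)^2 = 1 - Real.cos (Ω*t)^2 := by
    nlinarith [Real.sin_sq_add_cos_sq (Ω*t)]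
  set C := Real.cos (Ω*t); set S := Real.sin (Ω*t)
  have hne1 : (1 + s + ε*C) ≠ 0 := hDpos.ne'
  have hne2 : (1 + ε*C) ≠ 0 := (hfpos t).ne'
  field_simp
  linear_combination (ε^2*(1+s+ε*C)) * hsc + (1+s+ε*C) * hs2

theorem floquet_quasifrequency_cosine_modulation
    (ℓ v₀ vr δ Ω : ℝ) (hℓ : 0 < ℓ) (hv₀ : 0 < v₀) (hvr : 0 < vr)
    (hδ : 0 < δ) (hΩ : 0 < Ω) (ε : ℝ) (hε0 : 0 ≤ ε) (hε1 : ε < 1)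
    (c : ℝ → ℂ) (hc : Differentiable ℝ c) (hc' : Differentiable ℝ (deriv c))
    (hode : ∀ t : ℝ, (2 / (v₀ : ℂ)) * deriv c t
        + ((ℓ : ℂ) / ((δ : ℂ) * (vr : ℂ) ^ 2)) *
            deriv (fun s => deriv c s / ((1 / (1 + ε * Real.cos (Ω * s)) : ℝ) : ℂ)) t = 0) :
    deriv c (2 * π / Ω)
      = Complex.exp (-Complex.I * ((2 * π / Ω : ℝ) : ℂ) *
          ((-2 * Complex.I * (vr : ℂ) ^ 2 * (δ : ℂ) / ((ℓ : ℂ) * (v₀ : ℂ)))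
            / ((Real.sqrt (1 - ε ^ 2) : ℝ) : ℂ))) * deriv c 0 := by
  have hpi := Real.pi_pos
  set s : ℝ := Real.sqrt (1-ε^2) with hsdef
  have hs2 : s^2 = 1 - ε^2 := Real.sq_sqrt (by nlinarith)
  have hspos : 0 < s := Real.sqrt_pos.2 (by nlinarith)
  have hfpos : ∀ u : ℝ, 0 < 1 + ε * Real.cos (Ω*u) := fun u => by
    nlinarith [Real.neg_one_le_cos (Ω*u)]
  have hfne : ∀ u : ℝ, ((1 + ε * Real.cos (Ω*u) : ℝ) : ℂ) ≠ 0 := fun u => by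
    exact_mod_cast (hfpos u).ne'
  set β : ℝ := 2*δ*vr^2/(ℓ*v₀) with hβ
  set G : ℝ → ℝ := fun t => (Ω*t - 2*Real.arctan (ε * Real.sin (Ω*t) /
      (1 + s + ε * Real.cos (Ω*t)))) / (Ω * s) with hGdef
  have hG : ∀ t, HasDerivAt G (1/(1 + ε * Real.cos (Ω*t))) t := fun t =>
    floquet_antideriv Ω ε hΩ hε0 hε1 t
  set w : ℝ → ℂ := fun t => ((1 + ε * Real.cos (Ω*t) : ℝ) : ℂ) * deriv c t with hwdef
  have hfun : (fun u => deriv c u / ((1 / (1 + ε * Real.cos (Ω*u)) : ℝ) : ℂ)) = w := by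
    funext u
    simp only [hwdef]
    push_cast
    rw [one_div, div_eq_mul_inv, inv_inv]
    ring
  have hwd0 : ∀ t, HasDerivAt (fun u : ℝ => ((1 + ε * Real.cos (Ω*u) : ℝ) : ℂ))
      (((ε * (-Real.sin (Ω*t)*Ω) : ℝ) : ℂ)) t := by
    intro t
    have hΩt : HasDerivAt (fun u : ℝ => Ω*u) Ω t := by
      simpa using (hasDerivAt_id t).const_mul Ω
    have hcos : HasDerivAt (fun u : ℝ => Real.cos (Ω*u)) (-Real.sin (Ω*t) * Ω) t :=
      (Real.hasDerivAt_cos (Ω*t)).comp t hΩt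
    exact HasDerivAt.ofReal_comp (by simpa using ((hcos.const_mul ε).const_add 1))
  have hwdiff : ∀ t, DifferentiableAt ℝ w t := fun t =>
    ((hwd0 t).mul ((hc' t).hasDerivAt)).differentiableAt
  have hℓ' : (ℓ:ℂ) ≠ 0 := by exact_mod_cast hℓ.ne'
  have hv₀' : (v₀:ℂ) ≠ 0 := by exact_mod_cast hv₀.ne'
  have hδ' : (δ:ℂ) ≠ 0 := by exact_mod_cast hδ.ne'
  have hvr' : (vr:ℂ) ≠ 0 := by exact_mod_cast hvr.ne'
  have hode2 : ∀ t, deriv w t = -((β : ℝ) : ℂ) * deriv c t := by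
    intro t
    have h := hode t
    rw [hfun] at h
    rw [hβ]
    push_cast
    field_simp at h ⊢
    linear_combination h
  set H : ℝ → ℂ := fun t => w t * Complex.exp (((β * G t : ℝ) : ℂ)) with hHdef
  have hH : ∀ t, HasDerivAt H 0 t := by
    intro t
    have hwd : HasDerivAt w (-((β : ℝ) : ℂ) * deriv c t) t := by
      have := (hwdiff t).hasDerivAt
      rwa [hode2 t] at this
    have hexp : HasDerivAt (fun u => Complex.exp (((β * G u : ℝ) : ℂ)))
        (Complex.exp (((β * G t : ℝ) : ℂ)) * ((β * (1/(1 + ε * Real.cos (Ω*t))) : ℝ) : ℂ)) t :=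
      (((hG t).const_mul β).ofReal_comp).cexp
    have hmul := hwd.mul hexp
    refine HasDerivAt.congr_deriv hmul ?_; symm
    have hfc : (1 + (ε:ℂ) * Complex.cos ((Ω:ℂ)*(t:ℂ))) ≠ 0 := by
      have := hfne t; push_cast at this; exact this
    simp only [hwdef]
    push_cast
    field_simp
    ring
  have hHdiff : Differentiable ℝ H := fun t => (hH t).differentiableAt
  have hHzero : ∀ t, deriv H t = 0 := fun t => (hH t).deriv
  have hconst : H (2*π/Ω) = H 0 := is_const_of_deriv_eq_zero hHdiff hHzero _ _
  have hΩT : Ω * (2*π/Ω) = 2*π := by field_simp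
  have hcosT : Real.cos (Ω * (2*π/Ω)) = 1 := by rw [hΩT]; exact Real.cos_two_pi
  have hsinT : Real.sin (Ω * (2*π/Ω)) = 0 := by rw [hΩT]; exact Real.sin_two_pi
  have hGT : G (2*π/Ω) = 2*π/(Ω*s) := by
    simp only [hGdef, hΩT, Real.sin_two_pi, mul_zero, zero_div, Real.arctan_zero]
    ring
  have hG0 : G 0 = 0 := by
    simp [hGdef]
  have hcos0 : Real.cos (Ω * 0) = 1 := by rw [mul_zero]; exact Real.cos_zero
  have hkey : deriv c (2*π/Ω)
      = Complex.exp (-((β * (2*π/(Ω*s)) : ℝ) : ℂ)) * deriv c 0 := by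
    have h := hconst
    simp only [hHdef, hwdef, hGT, hG0, hcosT, mul_zero, Real.cos_zero, mul_one,
      Complex.ofReal_zero, Complex.exp_zero] at h
    have he' : ((1 + ε : ℝ) : ℂ) ≠ 0 := by
      exact_mod_cast (by positivity : (0:ℝ) < 1 + ε).ne'
    have h3 := mul_left_cancel₀ he'
      (show ((1+ε:ℝ):ℂ) * (deriv c (2*π/Ω) * Complex.exp (((β * (2*π/(Ω*s)) : ℝ) : ℂ)))
          = ((1+ε:ℝ):ℂ) * deriv c 0 by linear_combination h)
    rw [← h3, Complex.exp_neg]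
    field_simp
  rw [hkey]
  congr 1
  rw [hβ]
  have hΩ' : (Ω:ℂ) ≠ 0 := by exact_mod_cast hΩ.ne'
  have hs' : ((s:ℝ):ℂ) ≠ 0 := by exact_mod_cast hspos.ne'
  push_cast
  rw [hsdef] at hs' ⊢
  field_simp
  ring_nf
  rw [Complex.I_sq]
  ring
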